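/- arXiv:2012.11276 — 2 statements merged into one kernel-verified Lean document; each statement's English description precedes it below -/
import Mathlib

section
/- There exists a constant C > 0 such that for every integer k ≥ 1 and every nonzero real polynomial p of degree at most k, there exists a real polynomial q of degree at most k+2 with q(0) = q(1) = 0 and ∫₀¹ q'(x)² dx > 0 satisfying ∫₀¹ p(x) q(x) dx ≥ C k⁻² (∫₀¹ p(x)² dx)^{1/2} (∫₀¹ q'(x)² dx)^{1/2}. (This is the constructive core of the inverse inequality ‖p‖_{L²(I)} ≲ k² ‖p‖_{(H¹₀(I))'} on the unit interval.) -/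
open MeasureTheory Polynomial Finset

noncomputable def J (f : Polynomial ℝ) : ℝ := ∫ x in Set.Ioo (0:ℝ) 1, f.eval x

lemma integrableOn_poly (f : Polynomial ℝ) :
    IntegrableOn (fun x => f.eval x) (Set.Ioo (0:ℝ) 1) := by
  apply (f.continuous_aeval).integrableOn_Icc.mono_set Set.Ioo_subset_Icc_self

lemma J_derivative (f : Polynomial ℝ) : J (derivative f) = f.eval 1 - f.eval 0 := by
  have h : ∫ x in (0:ℝ)..1, (derivative f).eval x = f.eval 1 - f.eval 0 := by
    apply intervalIntegral.integral_eq_sub_of_hasDerivAt (fun x _ => f.hasDerivAt x)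
    exact (Polynomial.continuous _).intervalIntegrable _ _
  rw [J, ← integral_Ioc_eq_integral_Ioo, ← intervalIntegral.integral_of_le (by norm_num)]
  exact h

lemma J_add (f g : Polynomial ℝ) : J (f + g) = J f + J g := by
  simp only [J, eval_add]
  exact integral_add (integrableOn_poly f) (integrableOn_poly g)

lemma J_smul (c : ℝ) (f : Polynomial ℝ) : J (C c * f) = c * J f := by
  simp only [J, eval_mul, eval_C]
  exact integral_const_mul c _

lemma J_neg (f : Polynomial ℝ) : J (-f) = - J f := by
  simp only [J, eval_neg]; exact integral_neg _

lemma J_zero : J 0 = 0 := by simp [J]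

lemma J_sum {s : Finset ℕ} (F : ℕ → Polynomial ℝ) : J (∑ n ∈ s, F n) = ∑ n ∈ s, J (F n) := by
  simp only [J, eval_finset_sum]
  exact integral_finset_sum s (fun i _ => integrableOn_poly (F i))

lemma J_IBP (f g : Polynomial ℝ) :
    J (derivative f * g) =
      f.eval 1 * g.eval 1 - f.eval 0 * g.eval 0 - J (f * derivative g) := by
  have h := J_derivative (f * g)
  rw [derivative_mul, J_add] at h
  simp only [eval_mul] at h
  linarith

noncomputable def w : Polynomial ℝ := X^2 - X
noncomputable def P (n : ℕ) : Polynomial ℝ := derivative^[n] (w ^ n)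

lemma w_monic : w.Monic := by
  have : (X : Polynomial ℝ).degree < (2:ℕ) := by
    simpa using Polynomial.degree_X_le.trans_lt (by norm_num)
  simpa [w] using Polynomial.monic_X_pow_sub (p := (X : Polynomial ℝ)) (n := 2) this

lemma w_natDegree : w.natDegree = 2 := by
  unfold w; compute_degree!

lemma w_eval0 : w.eval 0 = 0 := by simp [w]
lemma w_eval1 : w.eval 1 = 0 := by simp [w]

lemma exists_factor (n : ℕ) : ∀ j, j ≤ n → ∃ s : Polynomial ℝ,
    derivative^[j] (w ^ n) = w ^ (n - j) * s := by
  intro j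
  induction j with
  | zero => intro _; exact ⟨1, by simp⟩
  | succ j ih =>
    intro hj
    obtain ⟨s, hs⟩ := ih (le_of_lt (Nat.lt_of_succ_le hj))
    have hnj : n - j = (n - (j+1)) + 1 := by omega
    refine ⟨C ((n - j : ℕ) : ℝ) * derivative w * s + w * derivative s, ?_⟩
    rw [Function.iterate_succ_apply', hs, derivative_mul, derivative_pow, hnj, Nat.add_sub_cancel]
    ring
lemma bdry0 {n j : ℕ} (hj : j < n) : (derivative^[j] (w ^ n)).eval 0 = 0 := by
  obtain ⟨s, hs⟩ := exists_factor n j hj.le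
  have : n - j ≠ 0 := by omega
  simp [hs, w_eval0, zero_pow this]
lemma bdry1 {n j : ℕ} (hj : j < n) : (derivative^[j] (w ^ n)).eval 1 = 0 := by
  obtain ⟨s, hs⟩ := exists_factor n j hj.le
  have : n - j ≠ 0 := by omega
  simp [hs, w_eval1, zero_pow this]

lemma J_IBPn (n : ℕ) : ∀ j, j ≤ n → ∀ g : Polynomial ℝ,
    J (derivative^[j] (w ^ n) * g) = (-1)^j * J (w ^ n * derivative^[j] g) := by
  intro j
  induction j with
  | zero => intro _ g; simp
  | succ j ih =>
    intro hj g
    have hjn : j < n := Nat.lt_of_succ_le hj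
    have h1 : J (derivative^[j+1] (w ^ n) * g)
        = - J (derivative^[j] (w ^ n) * derivative g) := by
      rw [Function.iterate_succ_apply', J_IBP, bdry0 hjn, bdry1 hjn]
      ring
    rw [h1, ih hjn.le (derivative g), ← Function.iterate_succ_apply]
    ring

lemma J_mul_zero (f : Polynomial ℝ) : J (f * 0) = 0 := by simp [J]

lemma orth (n : ℕ) (s : Polynomial ℝ) (hs : s.natDegree < n) : J (P n * s) = 0 := by
  rw [P, J_IBPn n n le_rfl s, iterate_derivative_eq_zero hs, J_mul_zero, mul_zero]

lemma P_zero : P 0 = 1 := by simp [P]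

lemma natDegree_P_le (n : ℕ) : (P n).natDegree ≤ n := by
  have h1 : (w ^ n).natDegree ≤ 2 * n := by
    refine (Polynomial.natDegree_pow_le).trans ?_
    rw [w_natDegree]; omega
  have h2 := Polynomial.natDegree_iterate_derivative (w ^ n) n
  rw [P]; omega

lemma itD_add (n : ℕ) (f g : Polynomial ℝ) :
    derivative^[n] (f + g) = derivative^[n] f + derivative^[n] g := by
  induction n with
  | zero => simp
  | succ n ih => rw [Function.iterate_succ_apply', Function.iterate_succ_apply',
      Function.iterate_succ_apply', ih, derivative_add]

lemma P_decomp (n : ℕ) (hn : 1 ≤ n) : ∃ t : Polynomial ℝ,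
    P n = C (((2*n).descFactorial n : ℕ) : ℝ) * X ^ n + t ∧ t.natDegree < n := by
  set u : Polynomial ℝ := w ^ n - X ^ (2*n) with hu
  have hwn : (w ^ n).natDegree = 2 * n := by
    rw [w_monic.natDegree_pow, w_natDegree]; ring
  have hundeg : u.natDegree ≤ 2*n - 1 := by
    by_cases h0 : u = 0
    · simp [h0]
    · have hdeg : u.degree < (2*n : ℕ) := by
        have := Polynomial.degree_sub_lt
          (p := w ^ n) (q := X ^ (2*n)) ?_ (w_monic.pow n).ne_zero ?_
        · rw [← hu] at this
          calc u.degree < (w^n).degree := this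
            _ ≤ (2*n : ℕ) := Polynomial.degree_le_natDegree.trans (by rw [hwn])
        · rw [Polynomial.degree_X_pow, Polynomial.degree_eq_natDegree (w_monic.pow n).ne_zero, hwn]
        · rw [(w_monic.pow n).leadingCoeff, Polynomial.leadingCoeff_X_pow]
      have h3 : u.natDegree < 2*n := (Polynomial.natDegree_lt_iff_degree_lt (n := 2*n) h0).mpr (by exact_mod_cast hdeg)
      omega
  have hsplit : w ^ n = X ^ (2*n) + u := by rw [hu]; ring
  refine ⟨derivative^[n] u, ?_, ?_⟩
  · have h4 : 2*n-n = n := by omega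
    rw [P, hsplit, itD_add n, iterate_derivative_X_pow_eq_C_mul, h4]
  · have := Polynomial.natDegree_iterate_derivative u n
    omega

lemma coeff_P (n : ℕ) : (P n).coeff n = (((2*n).descFactorial n : ℕ) : ℝ) := by
  rcases Nat.eq_zero_or_pos n with h | h
  · subst h; simp [P_zero]
  · obtain ⟨t, ht, htd⟩ := P_decomp n h
    rw [ht, Polynomial.coeff_add, Polynomial.coeff_C_mul, Polynomial.coeff_X_pow,
      Polynomial.coeff_eq_zero_of_natDegree_lt htd]
    simp

lemma w_eq : w = X * (X - C 1) := by
  rw [w, C_1]; ring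

lemma P_eval_one (n : ℕ) : (P n).eval 1 = (n.factorial : ℝ) := by
  rw [P, w_eq, mul_pow, iterate_derivative_mul, eval_finset_sum]
  rw [Finset.sum_eq_single n]
  · rw [iterate_derivative_X_sub_pow_self]; simp
  · intro k hk hkn
    have hk' : k < n := by
      simp only [Finset.mem_range] at hk; omega
    rw [iterate_derivative_X_sub_pow]
    have : n - k ≠ 0 := by omega
    simp [this, zero_pow]
  · intro h; simp at h

lemma P_eval_zero (n : ℕ) : (P n).eval 0 = (-1)^n * (n.factorial : ℝ) := by
  rw [P, w_eq, mul_pow, iterate_derivative_mul, eval_finset_sum]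
  rw [Finset.sum_eq_single 0]
  · simp only [Nat.choose_zero_right, one_smul, Nat.sub_zero, Function.iterate_zero_apply,
      eval_mul, eval_smul]
    rw [iterate_derivative_X_pow_eq_C_mul]
    have : n - n = 0 := by omega
    simp [this, Nat.descFactorial_self, mul_comm]
  · intro k hk hkn
    have hk' : k ≤ n := by simp only [Finset.mem_range] at hk; omega
    rw [iterate_derivative_X_pow_eq_C_mul]
    have h2 : n - (n - k) = k := by omega
    have h3 : k ≠ 0 := hkn
    simp [h2, zero_pow h3]
  · intro h; simp at h

lemma deriv_aux (a : ℕ) : derivative (C ((a+1:ℝ))⁻¹ * X^(a+1)) = X ^ a := by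
  rw [derivative_C_mul, derivative_X_pow]
  have h1 : (a + 1 : ℝ) ≠ 0 := by positivity
  rw [← mul_assoc, ← C_mul]
  push_cast
  rw [inv_mul_cancel₀ h1]
  simp

lemma J_Xpow (a : ℕ) : J (X ^ a) = ((a:ℝ)+1)⁻¹ := by
  rw [← deriv_aux a, J_derivative]
  simp

lemma JB (b : ℕ) : ∀ a : ℕ, J (X^a * (1 - X)^b)
    = (a.factorial * b.factorial : ℝ) / ((a+b+1).factorial) := by
  induction b with
  | zero =>
    intro a
    rw [pow_zero, mul_one, J_Xpow]
    rw [Nat.factorial_succ]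
    push_cast
    rw [Nat.factorial_zero]
    field_simp
    norm_num
  | succ b ih =>
    intro a
    have key : (X:Polynomial ℝ)^a * (1 - X)^(b+1)
        = derivative (C ((a+1:ℝ))⁻¹ * X^(a+1)) * (1 - X)^(b+1) := by
      rw [deriv_aux a]
    have hg : derivative ((1 - X : Polynomial ℝ)^(b+1))
        = C (-((b:ℝ)+1)) * (1 - X)^b := by
      rw [derivative_pow, Nat.add_sub_cancel]
      have hd : derivative (1 - X : Polynomial ℝ) = -1 := by simp
      rw [hd]
      simp only [Nat.cast_add, Nat.cast_one, C_neg, C_add, C_1]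
      ring
    have hmul : (C ((a+1:ℝ))⁻¹ * X^(a+1)) * derivative ((1 - X : Polynomial ℝ)^(b+1))
        = C (-((b:ℝ)+1) * ((a:ℝ)+1)⁻¹) * (X^(a+1) * (1 - X)^b) := by
      rw [hg, C_mul]
      ring
    rw [key, J_IBP, hmul, J_smul, ih (a+1)]
    have e0 : (C ((a+1:ℝ))⁻¹ * X^(a+1)).eval 0 = 0 := by simp
    have e1 : ((1 - X : Polynomial ℝ)^(b+1)).eval 1 = 0 := by simp
    rw [e0, e1]
    have h1 : (a:ℝ) + 1 ≠ 0 := by positivity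
    have h3 : (a+(b+1)+1) = ((a+b+1)+1) := by omega
    have h3' : (a+1+b+1) = ((a+b+1)+1) := by omega
    rw [h3, h3', Nat.factorial_succ (a+b+1), Nat.factorial_succ a, Nat.factorial_succ b]
    have h4 : ((a+b+1).factorial : ℝ) ≠ 0 := by positivity
    have h5 : ((a+b+1 : ℕ):ℝ) + 1 ≠ 0 := by positivity
    push_cast
    field_simp
    ring

lemma J_comm (f g : Polynomial ℝ) : J (f * g) = J (g * f) := by rw [mul_comm]

lemma J_w_pow (n : ℕ) : J (w ^ n) = (-1:ℝ)^n * ((n.factorial * n.factorial : ℝ) / ((2*n+1).factorial)) := by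
  have hw : w ^ n = C ((-1:ℝ)^n) * (X^n * (1 - X)^n) := by
    have h1 : w = C (-1) * (X * (1 - X)) := by
      rw [w, C_neg, C_1]; ring
    rw [h1, mul_pow, mul_pow, C_pow]
  rw [hw, J_smul, JB n n, show n+n+1 = 2*n+1 from by omega]

lemma J_P_Xpow (n : ℕ) : J (P n * X ^ n)
    = (n.factorial : ℝ) * J (w ^ n) * (-1:ℝ)^n := by
  rw [P, J_IBPn n n le_rfl (X ^ n), iterate_derivative_X_pow_eq_C_mul]
  have h1 : n - n = 0 := by omega
  rw [h1, pow_zero, mul_one, Nat.descFactorial_self]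
  rw [J_comm, J_smul]
  ring

lemma J_P_sq (n : ℕ) : J (P n * P n) = ((n.factorial : ℝ))^2 / (2*(n:ℝ)+1) := by
  have hfac : (((2*n).descFactorial n : ℕ) : ℝ) * (n.factorial : ℝ) = ((2*n).factorial : ℝ) := by
    have := Nat.factorial_mul_descFactorial (show n ≤ 2*n by omega)
    have h2 : 2*n - n = n := by omega
    rw [h2] at this
    exact_mod_cast by rw [mul_comm]; exact_mod_cast congrArg (Nat.cast (R := ℝ)) this
  have key : J (P n * P n) = (((2*n).descFactorial n : ℕ) : ℝ) * J (P n * X ^ n) := by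
    rcases Nat.eq_zero_or_pos n with h | h
    · subst h; simp [P_zero]
    · obtain ⟨t, ht, htd⟩ := P_decomp n h
      calc J (P n * P n) = J (P n * (C (((2*n).descFactorial n : ℕ) : ℝ) * X ^ n + t)) := by
            rw [← ht]
        _ = J (C (((2*n).descFactorial n : ℕ) : ℝ) * (P n * X ^ n) + P n * t) := by
            congr 1; ring
        _ = (((2*n).descFactorial n : ℕ) : ℝ) * J (P n * X ^ n) + J (P n * t) := by
            rw [J_add, J_smul]
        _ = _ := by rw [orth n t htd, add_zero]
  rw [key, J_P_Xpow, J_w_pow]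
  have h2 : ((2*n+1).factorial : ℝ) = (2*(n:ℝ)+1) * ((2*n).factorial : ℝ) := by
    rw [Nat.factorial_succ]; push_cast; ring
  have h3 : (2*(n:ℝ)+1) ≠ 0 := by positivity
  have h4 : ((2*n).factorial : ℝ) ≠ 0 := by positivity
  have hsq : ((-1:ℝ)^n)^2 = 1 := by
    rw [← pow_mul, mul_comm, pow_mul]; norm_num
  calc (((2*n).descFactorial n : ℕ) : ℝ) * ((n.factorial : ℝ) * ((-1:ℝ)^n * ((n.factorial * n.factorial : ℝ) / ((2*n+1).factorial))) * (-1:ℝ)^n)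
      = ((((2*n).descFactorial n : ℕ) : ℝ) * (n.factorial : ℝ)) * (((-1:ℝ)^n)^2 * ((n.factorial * n.factorial : ℝ) / ((2*n+1).factorial))) := by ring
    _ = ((2*n).factorial : ℝ) * ((n.factorial * n.factorial : ℝ) / ((2*n+1).factorial)) := by rw [hfac, hsq, one_mul]
    _ = ((n.factorial : ℝ))^2 / (2*(n:ℝ)+1) := by rw [h2]; field_simp

lemma J_P_P {n j : ℕ} (hnj : n ≠ j) : J (P n * P j) = 0 := by
  rcases lt_or_gt_of_ne hnj with h | h
  · rw [J_comm]
    exact orth j (P n) (lt_of_le_of_lt (natDegree_P_le n) h)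
  · exact orth n (P j) (lt_of_le_of_lt (natDegree_P_le j) h)

lemma descFac_ne (n : ℕ) : (((2*n).descFactorial n : ℕ) : ℝ) ≠ 0 := by
  have : (2*n).descFactorial n ≠ 0 := by
    rw [Ne, Nat.descFactorial_eq_zero_iff_lt]
    omega
  exact_mod_cast this

lemma span : ∀ m : ℕ, ∀ r : Polynomial ℝ, r.natDegree ≤ m →
    ∃ a : ℕ → ℝ, r = ∑ n ∈ Finset.range (m+1), C (a n) * P n := by
  intro m
  induction m with
  | zero =>
    intro r hr
    refine ⟨fun _ => r.coeff 0, ?_⟩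
    rw [Finset.sum_range_one, P_zero, mul_one]
    exact Polynomial.eq_C_of_natDegree_le_zero hr
  | succ m ih =>
    intro r hr
    set d : ℝ := (((2*(m+1)).descFactorial (m+1) : ℕ) : ℝ) with hd
    set c : ℝ := r.coeff (m+1) / d with hc
    have hr' : (r - C c * P (m+1)).natDegree ≤ m := by
      apply Polynomial.natDegree_le_iff_coeff_eq_zero.mpr
      intro N hN
      rw [Polynomial.coeff_sub, Polynomial.coeff_C_mul]
      rcases Nat.lt_or_ge (m+1) N with h | h
      · rw [Polynomial.coeff_eq_zero_of_natDegree_lt (lt_of_le_of_lt hr h),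
          Polynomial.coeff_eq_zero_of_natDegree_lt (lt_of_le_of_lt (natDegree_P_le (m+1)) h)]
        ring
      · have hNm : N = m+1 := by omega
        subst hNm
        rw [coeff_P, ← hd, hc, div_mul_cancel₀ _ (by rw [hd]; exact descFac_ne (m+1))]
        ring
    obtain ⟨a, ha⟩ := ih (r - C c * P (m+1)) hr'
    refine ⟨fun n => if n = m+1 then c else a n, ?_⟩
    rw [Finset.sum_range_succ]
    have hagree : ∑ n ∈ Finset.range (m+1), C (if n = m+1 then c else a n) * P n
        = ∑ n ∈ Finset.range (m+1), C (a n) * P n := by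
      apply Finset.sum_congr rfl
      intro n hn
      rw [Finset.mem_range] at hn
      rw [if_neg (by omega)]
    rw [hagree, ← ha]
    simp

lemma J_sq_nonneg (f : Polynomial ℝ) : 0 ≤ J (f * f) := by
  apply integral_nonneg
  intro x
  simp only [eval_mul]
  exact mul_self_nonneg _

lemma hP_pos (n : ℕ) : 0 < J (P n * P n) := by
  rw [J_P_sq]
  have h1 : (0:ℝ) < (n.factorial : ℝ) := by exact_mod_cast Nat.factorial_pos n
  positivity

lemma J_expand {m : ℕ} (c : ℕ → ℝ) {j : ℕ} (hj : j ≤ m) :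
    J ((∑ n ∈ Finset.range (m+1), C (c n) * P n) * P j)
      = c j * J (P j * P j) := by
  rw [Finset.sum_mul, J_sum]
  rw [Finset.sum_eq_single j]
  · rw [mul_assoc, J_smul]
  · intro n hn hnj
    rw [mul_assoc, J_smul, J_P_P hnj, mul_zero]
  · intro h
    exact absurd (Finset.mem_range.mpr (by omega)) h

lemma J_sq_expand {m : ℕ} (c : ℕ → ℝ) :
    J ((∑ n ∈ Finset.range (m+1), C (c n) * P n) * (∑ n ∈ Finset.range (m+1), C (c n) * P n))
      = ∑ n ∈ Finset.range (m+1), (c n)^2 * J (P n * P n) := by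
  rw [Finset.mul_sum, J_sum]
  apply Finset.sum_congr rfl
  intro j hj
  rw [Finset.mem_range] at hj
  rw [J_comm, mul_assoc, J_smul, J_comm (P j), J_expand c (show j ≤ m by omega)]
  ring

lemma J_dP_P_bound (n j : ℕ) :
    |J (derivative (P n) * P j)| ≤ 2 * (n.factorial : ℝ) * (j.factorial : ℝ) := by
  have hfn : (0:ℝ) < n.factorial := by exact_mod_cast Nat.factorial_pos n
  have hfj : (0:ℝ) < j.factorial := by exact_mod_cast Nat.factorial_pos j
  rcases Nat.lt_or_ge j n with h | h
  · have hzero : J (P n * derivative (P j)) = 0 := by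
      apply orth
      have h1 := Polynomial.natDegree_derivative_le (P j)
      have h2 := natDegree_P_le j
      omega
    have hval : J (derivative (P n) * P j)
        = (n.factorial : ℝ) * (j.factorial : ℝ) * (1 - (-1:ℝ)^(n+j)) := by
      rw [J_IBP, hzero, sub_zero, P_eval_one, P_eval_one, P_eval_zero, P_eval_zero]
      rw [pow_add]
      ring
    rw [hval]
    have habs : |1 - (-1:ℝ)^(n+j)| ≤ 2 := by
      rcases Nat.even_or_odd (n+j) with he | ho
      · rw [he.neg_one_pow]; norm_num
      · rw [ho.neg_one_pow]; norm_num
    calc |(n.factorial : ℝ) * (j.factorial : ℝ) * (1 - (-1:ℝ)^(n+j))|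
        = (n.factorial : ℝ) * (j.factorial : ℝ) * |1 - (-1:ℝ)^(n+j)| := by
          rw [abs_mul, abs_of_pos (by positivity)]
      _ ≤ (n.factorial : ℝ) * (j.factorial : ℝ) * 2 := by
          apply mul_le_mul_of_nonneg_left habs (by positivity)
      _ = 2 * (n.factorial : ℝ) * (j.factorial : ℝ) := by ring
  · have hzero : J (derivative (P n) * P j) = 0 := by
      rcases Nat.eq_zero_or_pos n with h0 | h0
      · subst h0
        rw [P_zero, derivative_one, zero_mul, J_zero]
      · rw [J_comm]
        apply orth
        have h1 := Polynomial.natDegree_derivative_le (P n)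
        have h2 := natDegree_P_le n
        omega
    rw [hzero, abs_zero]
    positivity

lemma sum_odd (m : ℕ) : ∑ n ∈ Finset.range m, (2*(n:ℝ)+1) = (m:ℝ)^2 := by
  induction m with
  | zero => simp
  | succ m ih => rw [Finset.sum_range_succ, ih]; push_cast; ring

lemma markov (m : ℕ) (r : Polynomial ℝ) (hr : r.natDegree ≤ m) :
    J (derivative r * derivative r) ≤ 4 * ((m:ℝ)+1)^4 * J (r * r) := by
  obtain ⟨a, ha⟩ := span m r hr
  have hdr : (derivative r).natDegree ≤ m :=
    le_trans (Polynomial.natDegree_derivative_le r) (by omega)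
  obtain ⟨b, hb⟩ := span m (derivative r) hdr
  set S : ℝ := ∑ n ∈ Finset.range (m+1), |a n| * (n.factorial : ℝ) with hS
  have hS0 : 0 ≤ S := by
    apply Finset.sum_nonneg
    intro n _
    have : (0:ℝ) < n.factorial := by exact_mod_cast Nat.factorial_pos n
    positivity
  have hcoef : ∀ j, j ≤ m → b j * J (P j * P j) = J (derivative r * P j) := by
    intro j hj
    conv_rhs => rw [hb]
    rw [J_expand b hj]
  have hsq : J (derivative r * derivative r)
      = ∑ j ∈ Finset.range (m+1), (b j)^2 * J (P j * P j) := by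
    conv_lhs => rw [hb]
    exact J_sq_expand b
  have hrr : J (r * r) = ∑ n ∈ Finset.range (m+1), (a n)^2 * J (P n * P n) := by
    conv_lhs => rw [ha]
    exact J_sq_expand a
  have hbound : ∀ j, j ≤ m → |J (derivative r * P j)| ≤ 2 * (j.factorial : ℝ) * S := by
    intro j hj
    have hexp : J (derivative r * P j)
        = ∑ n ∈ Finset.range (m+1), a n * J (derivative (P n) * P j) := by
      conv_lhs => rw [ha]
      rw [map_sum derivative (fun n => C (a n) * P n) (Finset.range (m+1))]
      rw [Finset.sum_mul, J_sum]
      apply Finset.sum_congr rfl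
      intro n _
      rw [Polynomial.derivative_C_mul, mul_assoc, J_smul]
    rw [hexp]
    calc |∑ n ∈ Finset.range (m+1), a n * J (derivative (P n) * P j)|
        ≤ ∑ n ∈ Finset.range (m+1), |a n * J (derivative (P n) * P j)| :=
          Finset.abs_sum_le_sum_abs _ _
      _ ≤ ∑ n ∈ Finset.range (m+1), |a n| * (2 * (n.factorial : ℝ) * (j.factorial : ℝ)) := by
          apply Finset.sum_le_sum
          intro n _
          rw [abs_mul]
          exact mul_le_mul_of_nonneg_left (J_dP_P_bound n j) (abs_nonneg _)
      _ = 2 * (j.factorial : ℝ) * S := by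
          rw [hS, Finset.mul_sum]
          apply Finset.sum_congr rfl
          intro n _
          ring
  have hCS : S^2 ≤ J (r * r) * ((m:ℝ)+1)^2 := by
    have key := sum_mul_sq_le_sq_mul_sq (Finset.range (m+1))
      (fun n => |a n| * Real.sqrt (J (P n * P n)))
      (fun n => (n.factorial : ℝ) / Real.sqrt (J (P n * P n)))
    have heq : ∀ n ∈ Finset.range (m+1),
        (|a n| * Real.sqrt (J (P n * P n))) * ((n.factorial : ℝ) / Real.sqrt (J (P n * P n)))
          = |a n| * (n.factorial : ℝ) := by
      intro n _
      have h1 := hP_pos n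
      have h2 : Real.sqrt (J (P n * P n)) ≠ 0 := by
        positivity
      field_simp
    rw [Finset.sum_congr rfl heq] at key
    have hf2 : ∀ n ∈ Finset.range (m+1),
        (|a n| * Real.sqrt (J (P n * P n)))^2 = (a n)^2 * J (P n * P n) := by
      intro n _
      rw [mul_pow, Real.sq_sqrt (hP_pos n).le, sq_abs]
    have hg2 : ∀ n ∈ Finset.range (m+1),
        ((n.factorial : ℝ) / Real.sqrt (J (P n * P n)))^2 = 2*(n:ℝ)+1 := by
      intro n _
      rw [div_pow, Real.sq_sqrt (hP_pos n).le, J_P_sq]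
      have h1 : (0:ℝ) < n.factorial := by exact_mod_cast Nat.factorial_pos n
      have h2 : (0:ℝ) < 2*(n:ℝ)+1 := by positivity
      field_simp
    rw [Finset.sum_congr rfl hf2, Finset.sum_congr rfl hg2, sum_odd (m+1)] at key
    rw [hrr]
    push_cast at key ⊢
    convert key using 2
  have hterm : ∀ j, j ≤ m → (b j)^2 * J (P j * P j) ≤ 4 * S^2 * (2*(j:ℝ)+1) := by
    intro j hj
    have hpj := hP_pos j
    have hbj : (b j)^2 * J (P j * P j) = (J (derivative r * P j))^2 / J (P j * P j) := by
      rw [← hcoef j hj]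
      field_simp
    rw [hbj]
    have hnum : (J (derivative r * P j))^2 ≤ (2 * (j.factorial : ℝ) * S)^2 := by
      rw [← sq_abs]
      apply pow_le_pow_left₀ (abs_nonneg _) (hbound j hj)
    calc (J (derivative r * P j))^2 / J (P j * P j)
        ≤ (2 * (j.factorial : ℝ) * S)^2 / J (P j * P j) := by
          exact (div_le_div_iff_of_pos_right hpj).mpr hnum
      _ = 4 * S^2 * (2*(j:ℝ)+1) := by
          rw [J_P_sq]
          have h1 : (0:ℝ) < j.factorial := by exact_mod_cast Nat.factorial_pos j
          have h2 : (0:ℝ) < 2*(j:ℝ)+1 := by positivity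
          field_simp
          ring
  calc J (derivative r * derivative r)
      = ∑ j ∈ Finset.range (m+1), (b j)^2 * J (P j * P j) := hsq
    _ ≤ ∑ j ∈ Finset.range (m+1), 4 * S^2 * (2*(j:ℝ)+1) := by
        apply Finset.sum_le_sum
        intro j hj
        exact hterm j (by simpa using Nat.lt_succ_iff.mp (Finset.mem_range.mp hj))
    _ = 4 * S^2 * ((m:ℝ)+1)^2 := by
        rw [← Finset.mul_sum, sum_odd (m+1)]
        push_cast
        ring
    _ ≤ 4 * (J (r * r) * ((m:ℝ)+1)^2) * ((m:ℝ)+1)^2 := by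
        apply mul_le_mul_of_nonneg_right _ (by positivity)
        apply mul_le_mul_of_nonneg_left hCS (by norm_num)
    _ = 4 * ((m:ℝ)+1)^4 * J (r * r) := by ring

noncomputable def antider (p : Polynomial ℝ) : Polynomial ℝ :=
  p.sum fun i c => C (c/((i:ℝ)+1)) * X^(i+1)

lemma derivative_antider (p : Polynomial ℝ) : derivative (antider p) = p := by
  rw [antider, Polynomial.sum_def, map_sum]
  have : ∀ i ∈ p.support, derivative (C (p.coeff i/((i:ℝ)+1)) * X^(i+1))
      = C (p.coeff i) * X^i := by
    intro i _
    rw [Polynomial.derivative_C_mul, derivative_X_pow, ← mul_assoc, ← C_mul, Nat.add_sub_cancel]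
    congr 2
    push_cast
    field_simp
  rw [Finset.sum_congr rfl this]
  simp_rw [Polynomial.C_mul_X_pow_eq_monomial]
  exact (Polynomial.as_sum_support p).symm

lemma natDegree_antider_le (p : Polynomial ℝ) : (antider p).natDegree ≤ p.natDegree + 1 := by
  rw [antider]
  apply Polynomial.natDegree_sum_le_of_forall_le
  intro i hi
  refine (Polynomial.natDegree_C_mul_le _ _).trans ?_
  rw [Polynomial.natDegree_X_pow]
  have := Polynomial.le_natDegree_of_mem_supp i hi
  omega

lemma J_sq_pos (f : Polynomial ℝ) (hf : f ≠ 0) : 0 < J (f * f) := by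
  rw [J]
  apply (setIntegral_pos_iff_support_of_nonneg_ae ?_ ?_).mpr
  · set Z : Set ℝ := {x | f.IsRoot x} with hZ
    have hZfin : Z.Finite := Polynomial.finite_setOf_isRoot hf
    have hZ0 : volume Z = 0 := hZfin.countable.measure_zero (volume : Measure ℝ)
    have hsub : Set.Ioo (0:ℝ) 1 ⊆ (Function.support (fun x => (f*f).eval x) ∩ Set.Ioo (0:ℝ) 1) ∪ Z := by
      intro x hx
      by_cases hr : f.eval x = 0
      · exact Or.inr hr
      · left
        refine ⟨?_, hx⟩
        simp only [Function.mem_support, eval_mul]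
        exact mul_ne_zero hr hr
    by_contra hcon
    push_neg at hcon
    have h0 : volume (Function.support (fun x => (f*f).eval x) ∩ Set.Ioo (0:ℝ) 1) = 0 :=
      le_antisymm hcon zero_le
    have hm1 : volume (Set.Ioo (0:ℝ) 1)
        ≤ volume (((Function.support fun x => (f*f).eval x) ∩ Set.Ioo (0:ℝ) 1) ∪ Z) :=
      measure_mono hsub
    have hm2 := hm1.trans (measure_union_le (μ := (volume : Measure ℝ)) _ _)
    rw [h0, hZ0, Real.volume_Ioo] at hm2
    simp at hm2
  · filter_upwards with x
    simp only [eval_mul]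
    exact mul_self_nonneg _
  · exact integrableOn_poly _

theorem stmt_1 : ∃ C : ℝ, 0 < C ∧ ∀ k : ℕ, 1 ≤ k → ∀ p : Polynomial ℝ,
    p.natDegree ≤ k → p ≠ 0 →
    ∃ q : Polynomial ℝ, q.natDegree ≤ k + 2 ∧ q.eval 0 = 0 ∧ q.eval 1 = 0 ∧
      0 < (∫ x in Set.Ioo (0:ℝ) 1, (Polynomial.derivative q).eval x ^ 2) ∧
      C / (k : ℝ) ^ 2 * Real.sqrt (∫ x in Set.Ioo (0:ℝ) 1, p.eval x ^ 2) *
          Real.sqrt (∫ x in Set.Ioo (0:ℝ) 1, (Polynomial.derivative q).eval x ^ 2)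
        ≤ ∫ x in Set.Ioo (0:ℝ) 1, p.eval x * q.eval x := by
  refine ⟨1/18, by norm_num, ?_⟩
  intro k hk p hp hp0
  set F1 := antider p with hF1
  set F2 := antider F1 with hF2
  set q : Polynomial ℝ := -F2 + C (F2.eval 0) + C (F2.eval 1 - F2.eval 0) * X with hq
  have hq0 : q.eval 0 = 0 := by simp [hq]
  have hq1 : q.eval 1 = 0 := by simp [hq]
  have hq2 : derivative (derivative q) = -p := by
    rw [hq]
    simp only [derivative_add, derivative_neg, derivative_C, derivative_C_mul, derivative_X,
      mul_one, derivative_antider, add_zero, neg_add_rev]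
    rw [hF2, derivative_antider, hF1, derivative_antider]
  have hqdeg : q.natDegree ≤ k + 2 := by
    have h1 : F1.natDegree ≤ k + 1 := by
      have := natDegree_antider_le p; rw [← hF1] at this; omega
    have h2 : F2.natDegree ≤ k + 2 := by
      have := natDegree_antider_le F1; rw [← hF2] at this; omega
    rw [hq]
    refine (Polynomial.natDegree_add_le _ _).trans (max_le ?_ ?_)
    · refine (Polynomial.natDegree_add_le _ _).trans (max_le ?_ ?_)
      · rw [Polynomial.natDegree_neg]; exact h2
      · rw [Polynomial.natDegree_C]; omega
    · refine (Polynomial.natDegree_C_mul_le _ _).trans ?_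
      rw [Polynomial.natDegree_X]; omega
  have hrdeg : (derivative q).natDegree ≤ k + 1 := by
    have := Polynomial.natDegree_derivative_le q; omega
  have hdq0 : derivative q ≠ 0 := by
    intro h
    apply hp0
    have : derivative (derivative q) = 0 := by rw [h, derivative_zero]
    rw [hq2] at this
    simpa using this
  set A : ℝ := J (p * p) with hA
  set B : ℝ := J (derivative q * derivative q) with hB
  have hBpos : 0 < B := J_sq_pos _ hdq0
  have hApos : 0 ≤ A := J_sq_nonneg p
  have hmar := markov (k+1) (derivative q) hrdeg
  rw [hq2, neg_mul_neg, ← hA, ← hB] at hmar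
  have hcast : ((k+1:ℕ):ℝ) + 1 = (k:ℝ) + 2 := by push_cast; ring
  rw [hcast] at hmar
  have hpq : J (p * q) = B := by
    have hIBP := J_IBP (derivative q) q
    rw [hq2, hq0, hq1, mul_zero, mul_zero, sub_zero, zero_sub] at hIBP
    have hneg : (-p) * q = -(p*q) := by ring
    rw [hneg, J_neg, ← hB] at hIBP
    linarith
  have e1 : (∫ x in Set.Ioo (0:ℝ) 1, p.eval x ^2) = A := by
    rw [hA, J]; apply setIntegral_congr_fun measurableSet_Ioo; intro x _; simp [eval_mul, pow_two]
  have e2 : (∫ x in Set.Ioo (0:ℝ) 1, (derivative q).eval x ^2) = B := by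
    rw [hB, J]; apply setIntegral_congr_fun measurableSet_Ioo; intro x _; simp [eval_mul, pow_two]
  have e3 : (∫ x in Set.Ioo (0:ℝ) 1, p.eval x * q.eval x) = J (p * q) := by
    rw [J]; apply setIntegral_congr_fun measurableSet_Ioo; intro x _; simp [eval_mul]
  refine ⟨q, hqdeg, hq0, hq1, ?_, ?_⟩
  · rw [e2]; exact hBpos
  · rw [e1, e2, e3, hpq]
    have hk1 : (1:ℝ) ≤ (k:ℝ) := by exact_mod_cast hk
    have hsA : Real.sqrt A ≤ 2*((k:ℝ)+2)^2 * Real.sqrt B := by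
      calc Real.sqrt A ≤ Real.sqrt (4*((k:ℝ)+2)^4 * B) := Real.sqrt_le_sqrt hmar
        _ = 2*((k:ℝ)+2)^2 * Real.sqrt B := by
            rw [show 4*((k:ℝ)+2)^4 * B = (2*((k:ℝ)+2)^2)^2 * B by ring,
              Real.sqrt_mul (by positivity), Real.sqrt_sq (by positivity)]
    calc (1/18) / (k:ℝ)^2 * Real.sqrt A * Real.sqrt B
        ≤ (1/18) / (k:ℝ)^2 * (2*((k:ℝ)+2)^2 * Real.sqrt B) * Real.sqrt B := by
          apply mul_le_mul_of_nonneg_right _ (Real.sqrt_nonneg _)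
          apply mul_le_mul_of_nonneg_left hsA (by positivity)
      _ = (2*((k:ℝ)+2)^2/(18*(k:ℝ)^2)) * (Real.sqrt B * Real.sqrt B) := by ring
      _ = (2*((k:ℝ)+2)^2/(18*(k:ℝ)^2)) * B := by rw [Real.mul_self_sqrt hBpos.le]
      _ ≤ 1 * B := by
          apply mul_le_mul_of_nonneg_right _ hBpos.le
          rw [div_le_one (by positivity)]
          nlinarith
      _ = B := one_mul B
end

section
/- Let H be a real inner product space, let n ≥ 1, and let φ₁, …, φₙ ∈ H be linearly independent. Let S be the n × n Gram matrix with entries S_{ij} = ⟪φ_j, φ_i⟫. Then S is invertible, and for all continuous linear functionals F, G : H → ℝ, writing F⃗ = (F(φ₁), …, F(φₙ)) and G⃗ = (G(φ₁), …, G(φₙ)), one has F⃗ᵀ S⁻¹ G⃗ ≤ ‖F‖ ‖G‖, where ‖F‖ and ‖G‖ are the operator norms of F and G. (Continuity of the algebraically realized stabilization form s_K(F,G) = F⃗ᵀ S⁻¹ G⃗ with continuity constant M(k) = 1.) -/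
open Matrix in
lemma gram_mulVec {H : Type*} [NormedAddCommGroup H] [InnerProductSpace ℝ H]
    {n : ℕ} (φ : Fin n → H) (c : Fin n → ℝ) (i : Fin n) :
    ((Matrix.of fun i j : Fin n => (inner ℝ (φ j) (φ i) : ℝ)) *ᵥ c) i
      = (inner ℝ (∑ j, c j • φ j) (φ i) : ℝ) := by
  simp [Matrix.mulVec, dotProduct, sum_inner, real_inner_smul_left, mul_comm]

open Matrix in
lemma gram_posdef {H : Type*} [NormedAddCommGroup H] [InnerProductSpace ℝ H]
    {n : ℕ} (φ : Fin n → H) (hφ : LinearIndependent ℝ φ) :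
    (Matrix.of fun i j : Fin n => (inner ℝ (φ j) (φ i) : ℝ)).PosDef := by
  rw [Matrix.posDef_iff_dotProduct_mulVec]
  constructor
  · ext i j
    simp [Matrix.IsHermitian, real_inner_comm]
  · intro x hx
    have h : dotProduct (star x) ((Matrix.of fun i j : Fin n => (inner ℝ (φ j) (φ i) : ℝ)) *ᵥ x)
        = (inner ℝ (∑ j, x j • φ j) (∑ i, x i • φ i) : ℝ) := by
      simp only [dotProduct, gram_mulVec, star_trivial]
      rw [inner_sum]
      simp [real_inner_smul_right, mul_comm]
    rw [h, real_inner_self_eq_norm_sq]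
    have hne : ∑ j, x j • φ j ≠ 0 := by
      intro h0
      exact hx (by
        have := linearIndependent_iff'.mp hφ Finset.univ x (by simpa using h0)
        ext i; exact this i (Finset.mem_univ i))
    exact pow_pos (norm_pos_iff.mpr hne) 2

theorem stmt_11 (H : Type*) [NormedAddCommGroup H] [InnerProductSpace ℝ H]
    (n : ℕ) (hn : 1 ≤ n) (φ : Fin n → H) (hφ : LinearIndependent ℝ φ) :
    IsUnit (Matrix.of fun i j : Fin n => (inner ℝ (φ j) (φ i) : ℝ)) ∧
    ∀ F G : H →L[ℝ] ℝ,
      dotProduct (fun i => F (φ i))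
        (Matrix.mulVec (Matrix.of fun i j : Fin n => (inner ℝ (φ j) (φ i) : ℝ))⁻¹
          (fun i => G (φ i))) ≤ ‖F‖ * ‖G‖ := by
  set S := (Matrix.of fun i j : Fin n => (inner ℝ (φ j) (φ i) : ℝ)) with hS
  have hpd := gram_posdef φ hφ
  have hunit : IsUnit S := hpd.isUnit
  refine ⟨hunit, fun F G => ?_⟩
  set c : Fin n → ℝ := S⁻¹.mulVec (fun i => G (φ i)) with hc
  set u : H := ∑ j, c j • φ j with hu
  have hSc : S.mulVec c = fun i => G (φ i) := by
    rw [hc, Matrix.mulVec_mulVec, Matrix.mul_nonsing_inv _ ((Matrix.isUnit_iff_isUnit_det _).mp hunit)]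
    simp
  have hG : ∀ i, (inner ℝ u (φ i) : ℝ) = G (φ i) := by
    intro i
    rw [hu, ← gram_mulVec φ c i, hSc]
  have hdot : dotProduct (fun i => F (φ i)) c = F u := by
    simp [dotProduct, hu, map_sum, map_smul, mul_comm, smul_eq_mul]
  have hnorm : ‖u‖ ≤ ‖G‖ := by
    have h1 : ‖u‖ ^ 2 = G u := by
      rw [← real_inner_self_eq_norm_sq, hu]
      rw [inner_sum]
      simp only [real_inner_smul_right]
      rw [map_sum]
      congr 1; ext i
      rw [map_smul, ← hu, hG i]; simp [mul_comm]
    have h2 : G u ≤ ‖G‖ * ‖u‖ := (le_abs_self _).trans (G.le_opNorm u)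
    nlinarith [norm_nonneg u, norm_nonneg G]
  calc dotProduct (fun i => F (φ i)) c = F u := hdot
    _ ≤ ‖F‖ * ‖u‖ := (le_abs_self _).trans (F.le_opNorm u)
    _ ≤ ‖F‖ * ‖G‖ := by
        exact mul_le_mul_of_nonneg_left hnorm (norm_nonneg F)
end
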